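/- Let 0 < A_avg < A_max and p = A_avg/A_max. Define F(β) = ((1-p)β² + p·A_max²)/(2·((1-p)β + p·A_max)) for β ∈ [0, A_max]. Then F is a contraction-like map in the sense that F has exactly one fixed point in [0, A_max], namely β* = (√A_avg/(√A_max+√A_avg))·A_max, and F(β) > β for β < β* while F(β) < β for β > β* (within [0, A_max]). -/

import Mathlib

theorem stmt_18 (A_avg A_max : ℝ) (h0 : 0 < A_avg) (h1 : A_avg < A_max) :
    let p := A_avg / A_max
    let βstar := (Real.sqrt A_avg / (Real.sqrt A_max + Real.sqrt A_avg)) * A_max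
    let F : ℝ → ℝ := fun β =>
      ((1 - p) * β ^ 2 + p * A_max ^ 2) / (2 * ((1 - p) * β + p * A_max))
    βstar ∈ Set.Icc 0 A_max ∧ F βstar = βstar ∧
      (∀ β ∈ Set.Icc (0:ℝ) A_max, F β = β → β = βstar) ∧
      (∀ β ∈ Set.Icc (0:ℝ) A_max, β < βstar → β < F β) ∧
      (∀ β ∈ Set.Icc (0:ℝ) A_max, βstar < β → F β < β) := by
  intro p βstar F
  have hm : 0 < A_max := h0.trans h1
  have hsa0 : 0 < Real.sqrt A_avg := Real.sqrt_pos.2 h0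
  have hsm0 : 0 < Real.sqrt A_max := Real.sqrt_pos.2 hm
  have hsa2 : Real.sqrt A_avg ^ 2 = A_avg := Real.sq_sqrt h0.le
  have hsm2 : Real.sqrt A_max ^ 2 = A_max := Real.sq_sqrt hm.le
  have hlt : Real.sqrt A_avg < Real.sqrt A_max :=
    Real.sqrt_lt_sqrt h0.le h1
  have hp0 : 0 < p := div_pos h0 hm
  have hp1 : p < 1 := (div_lt_one hm).2 h1
  have hsum : 0 < Real.sqrt A_max + Real.sqrt A_avg := by positivity
  have hβpos : 0 < βstar := by
    have : 0 < Real.sqrt A_avg / (Real.sqrt A_max + Real.sqrt A_avg) :=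
      div_pos hsa0 hsum
    exact mul_pos this hm
  have hβle : βstar ≤ A_max := by
    have hr : Real.sqrt A_avg / (Real.sqrt A_max + Real.sqrt A_avg) ≤ 1 := by
      rw [div_le_one hsum]; linarith
    calc βstar ≤ 1 * A_max := mul_le_mul_of_nonneg_right hr hm.le
    _ = A_max := one_mul _
  have hkey : p * A_max ^ 2 - 2 * p * A_max * βstar - (1 - p) * βstar ^ 2 = 0 := by
    show A_avg / A_max * A_max ^ 2 -
        2 * (A_avg / A_max) * A_max *
          ((Real.sqrt A_avg / (Real.sqrt A_max + Real.sqrt A_avg)) * A_max) -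
        (1 - A_avg / A_max) *
          ((Real.sqrt A_avg / (Real.sqrt A_max + Real.sqrt A_avg)) * A_max) ^ 2 = 0
    rw [← hsa2, ← hsm2]
    field_simp
    rw [Real.sqrt_sq hsm0.le, Real.sqrt_sq hsa0.le]
    ring
  have hN : ∀ β : ℝ, p * A_max ^ 2 - 2 * p * A_max * β - (1 - p) * β ^ 2 =
      (βstar - β) * (2 * p * A_max + (1 - p) * (β + βstar)) := by
    intro β
    linear_combination hkey
  have hD : ∀ β : ℝ, 0 ≤ β → 0 < 2 * ((1 - p) * β + p * A_max) := by
    intro β hb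
    have h2 : 0 < p * A_max := mul_pos hp0 hm
    nlinarith
  have hFsub : ∀ β : ℝ, 0 ≤ β → F β - β =
      (p * A_max ^ 2 - 2 * p * A_max * β - (1 - p) * β ^ 2) /
        (2 * ((1 - p) * β + p * A_max)) := by
    intro β hb
    have hD' := hD β hb
    show ((1 - p) * β ^ 2 + p * A_max ^ 2) / (2 * ((1 - p) * β + p * A_max)) - β = _
    rw [eq_div_iff hD'.ne', sub_mul, div_mul_cancel₀ _ hD'.ne']
    ring
  have hfact : ∀ β : ℝ, 0 ≤ β → 0 < 2 * p * A_max + (1 - p) * (β + βstar) := by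
    intro β hb
    have h2 : 0 < p * A_max := mul_pos hp0 hm
    nlinarith
  refine ⟨⟨hβpos.le, hβle⟩, ?_, ?_, ?_, ?_⟩
  · have := hFsub βstar hβpos.le
    rw [hN βstar] at this
    simp at this
    linarith
  · rintro β ⟨hb0, hb1⟩ hfix
    have h := hFsub β hb0
    rw [hfix, sub_self, hN β, eq_comm, div_eq_zero_iff] at h
    rcases h with h | h
    · rcases mul_eq_zero.1 h with h | h
      · linarith
      · exact absurd h (hfact β hb0).ne'
    · exact absurd h (hD β hb0).ne'
  · rintro β ⟨hb0, hb1⟩ hlt'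
    have h := hFsub β hb0
    rw [hN β] at h
    have hnum : 0 < (βstar - β) * (2 * p * A_max + (1 - p) * (β + βstar)) :=
      mul_pos (by linarith) (hfact β hb0)
    have : 0 < F β - β := h ▸ div_pos hnum (hD β hb0)
    linarith
  · rintro β ⟨hb0, hb1⟩ hlt'
    have h := hFsub β hb0
    rw [hN β] at h
    have hnum : (βstar - β) * (2 * p * A_max + (1 - p) * (β + βstar)) < 0 :=
      mul_neg_of_neg_of_pos (by linarith) (hfact β hb0)
    have : F β - β < 0 := h ▸ div_neg_of_neg_of_pos hnum (hD β hb0)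
    linarith
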